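/- Let H be a subgroup of a finite group G and let R^(i) denote the i-th adjoint subring of the double coset ring R(G,H) (so R^(0) = R(G,H) and R^(i+1) is generated by the double cosets contained in some X·X* with X a double coset in R^(i)). Then Γ_{R^(i)} = H^(G,i), the i-th term of the series of successive normal closures of H in G. -/

import Mathlib

/-- The double coset `HxH` of a subgroup `H` at `x`. -/
def dc {G : Type*} [Group G] (H : Subgroup G) (x : G) : Set G :=
  {z | ∃ h₁ ∈ H, ∃ h₂ ∈ H, z = h₁ * x * h₂}

/-- The product set `HxHyH`. -/
def dc3 {G : Type*} [Group G] (H : Subgroup G) (x y : G) : Set G :=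
  {z | ∃ h₁ ∈ H, ∃ h₂ ∈ H, ∃ h₃ ∈ H, z = h₁ * x * h₂ * y * h₃}

/-- The subgroup `Γ_{R^(i)}` attached to the `i`-th adjoint subring of the
double coset ring `R(G,H)`: `Γ_{R^(0)} = G`, and `Γ_{R^(i+1)}` is generated by
the supports `HxHx⁻¹H = X·X*` of `X = HxH` with `x ∈ Γ_{R^(i)}`. -/
def adjIter {G : Type*} [Group G] (H : Subgroup G) : ℕ → Subgroup G
  | 0 => ⊤
  | i + 1 => Subgroup.closure (⋃ x ∈ (adjIter H i : Set G), dc3 H x x⁻¹)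

/-- The normal closure of `H` in `K`. -/
def ncl {G : Type*} [Group G] (H K : Subgroup G) : Subgroup G :=
  Subgroup.closure {g | ∃ h ∈ H, ∃ k ∈ K, g = k * h * k⁻¹}

/-- The series of successive normal closures. -/
def sncSeries {G : Type*} [Group G] (H : Subgroup G) : ℕ → Subgroup G
  | 0 => ⊤
  | i + 1 => ncl H (sncSeries H i)

/-- `Γ_{R^(i)} = H^(G,i)` for every `i`. -/
lemma aux_closure {G : Type*} [Group G] (H K : Subgroup G) :
    Subgroup.closure (⋃ x ∈ (K : Set G), dc3 H x x⁻¹) = ncl H K := by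
  apply le_antisymm
  · rw [Subgroup.closure_le]
    rintro g hg
    simp only [Set.mem_iUnion] at hg
    obtain ⟨x, hx, h₁, hh₁, h₂, hh₂, h₃, hh₃, rfl⟩ := hg
    have hH : ∀ h ∈ H, h ∈ ncl H K := fun h hh =>
      Subgroup.subset_closure ⟨h, hh, 1, K.one_mem, by simp⟩
    have hmid : x * h₂ * x⁻¹ ∈ ncl H K := Subgroup.subset_closure ⟨h₂, hh₂, x, hx, rfl⟩
    have := mul_mem (mul_mem (hH h₁ hh₁) hmid) (hH h₃ hh₃)
    rw [SetLike.mem_coe]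
    convert this using 1
    group
  · rw [ncl, Subgroup.closure_le]
    rintro g ⟨h, hh, k, hk, rfl⟩
    apply Subgroup.subset_closure
    simp only [Set.mem_iUnion]
    exact ⟨k, hk, 1, H.one_mem, h, hh, 1, H.one_mem, by group⟩

/-- `Γ_{R^(i)} = H^(G,i)` for every `i`. -/
theorem stmt11 {G : Type*} [Group G] [Finite G] (H : Subgroup G) (i : ℕ) :
    adjIter H i = sncSeries H i := by
  induction i with
  | zero => rfl
  | succ i ih => rw [adjIter, sncSeries, ih, aux_closure]
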